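/- For all x_0, x_1, y_0, y_1 ∈ ℝ^d and h > 0, C_{2,h}(x_0, x_1; y_0, y_1) = (1/h)[ |y_1 − x_1|² + 3 |y_1 − x_1 − (2/h)(y_0 − x_0 − h x_1)|² ], where C_{2,h} is the infimum of ∫_0^h |ξ''(t)|² dt over ξ ∈ C²([0,h], ℝ^d) with ξ(0) = x_0, ξ'(0) = x_1, ξ(h) = y_0, ξ'(h) = y_1. -/

import Mathlib

open scoped RealInnerProductSpace
open intervalIntegral MeasureTheory

section Aux
variable {E : Type*} [NormedAddCommGroup E] [InnerProductSpace ℝ E] [CompleteSpace E]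

lemma inner_intervalIntegral (c : E) {f : ℝ → E} {a b : ℝ}
    (hf : IntervalIntegrable f volume a b) :
    ∫ t in a..b, ⟪c, f t⟫ = ⟪c, ∫ t in a..b, f t⟫ := by
  simpa using ((innerSL ℝ c).intervalIntegral_comp_comm hf)

lemma integral_norm_linear_sq (α β : E) (h : ℝ) :
    ∫ t in (0:ℝ)..h, ‖α + t • β‖ ^ 2
      = h * ‖α‖ ^ 2 + h ^ 2 * ⟪α, β⟫ + h ^ 3 / 3 * ‖β‖ ^ 2 := by
  have key : ∀ t : ℝ, ‖α + t • β‖ ^ 2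
      = ‖α‖ ^ 2 + (2 * ⟪α, β⟫) * t + ‖β‖ ^ 2 * t ^ 2 := by
    intro t
    rw [norm_add_sq_real, real_inner_smul_right, norm_smul]
    simp [mul_pow]
    ring
  simp_rw [key]
  rw [intervalIntegral.integral_add (by apply Continuous.intervalIntegrable; continuity)
      (by apply Continuous.intervalIntegrable; continuity),
    intervalIntegral.integral_add (by apply Continuous.intervalIntegrable; continuity)
      (by apply Continuous.intervalIntegrable; continuity),
    intervalIntegral.integral_const, intervalIntegral.integral_const_mul,
    intervalIntegral.integral_const_mul, integral_id, integral_pow]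
  push_cast
  simp only [smul_eq_mul]
  ring
end Aux

/-- The mean squared derivative cost function `C_{n,h}(x; y)`. -/
noncomputable def msdCost (n d : ℕ) (h : ℝ) (x y : Fin n → EuclideanSpace ℝ (Fin d)) : ℝ :=
  sInf { c : ℝ | ∃ ξ : ℝ → EuclideanSpace ℝ (Fin d), ContDiff ℝ n ξ ∧
    (∀ k : Fin n, iteratedDeriv k ξ 0 = x k ∧ iteratedDeriv k ξ h = y k) ∧
    c = ∫ t in (0:ℝ)..h, ‖iteratedDeriv n ξ t‖ ^ 2 }

set_option maxHeartbeats 2000000 in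
theorem msdCost_two (d : ℕ) (hd : 1 ≤ d) (h : ℝ) (hh : 0 < h)
    (x₀ x₁ y₀ y₁ : EuclideanSpace ℝ (Fin d)) :
    msdCost 2 d h ![x₀, x₁] ![y₀, y₁]
      = (1 / h) * (‖y₁ - x₁‖ ^ 2
          + 3 * ‖y₁ - x₁ - (2 / h) • (y₀ - x₀ - h • x₁)‖ ^ 2) := by
  have hh0 : h ≠ 0 := ne_of_gt hh
  set a : EuclideanSpace ℝ (Fin d) := y₁ - x₁ with ha
  set w : EuclideanSpace ℝ (Fin d) := y₀ - x₀ - h • x₁ with hw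
  set b : EuclideanSpace ℝ (Fin d) := a - (2/h) • w with hb
  set α : EuclideanSpace ℝ (Fin d) := h⁻¹ • (a - (3:ℝ) • b) with hα
  set β : EuclideanSpace ℝ (Fin d) := (6/h^2) • b with hβ
  have hcont : Continuous (fun t : ℝ => α + t • β) :=
    continuous_const.add (continuous_id.smul continuous_const)
  -- value of the quadratic integral
  have hPV : ∫ t in (0:ℝ)..h, ‖α + t • β‖ ^ 2 = 1/h * (‖a‖^2 + 3*‖b‖^2) := by
    rw [integral_norm_linear_sq]
    simp only [← real_inner_self_eq_norm_sq, hα, hβ, real_inner_smul_left,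
      real_inner_smul_right, inner_sub_left, inner_sub_right]
    rw [real_inner_comm b a]
    field_simp
    ring
  -- integrals of the linear function
  have i1 : IntervalIntegrable (fun t : ℝ => t • β) volume 0 h := by
    apply Continuous.intervalIntegrable; exact continuous_id.smul continuous_const
  have i2 : IntervalIntegrable (fun t : ℝ => t • α) volume 0 h := by
    apply Continuous.intervalIntegrable; exact continuous_id.smul continuous_const
  have i3 : IntervalIntegrable (fun t : ℝ => t ^ 2 • β) volume 0 h := by
    apply Continuous.intervalIntegrable; exact (continuous_pow 2).smul continuous_const
  have hintP : ∫ t in (0:ℝ)..h, (α + t • β) = a := by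
    rw [intervalIntegral.integral_add intervalIntegrable_const i1,
      intervalIntegral.integral_const, intervalIntegral.integral_smul_const, integral_id,
      hα, hβ]
    match_scalars <;> field_simp <;> ring
  have hinttP : ∫ t in (0:ℝ)..h, t • (α + t • β) = (h^2/2) • α + (h^3/3) • β := by
    have e : ∀ t : ℝ, t • (α + t • β) = t • α + (t^2) • β := by
      intro t; rw [smul_add, pow_two, mul_smul]
    simp_rw [e]
    rw [intervalIntegral.integral_add i2 i3,
      intervalIntegral.integral_smul_const, intervalIntegral.integral_smul_const,
      integral_id, integral_pow]
    norm_num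
  refine IsLeast.csInf_eq ⟨?_, ?_⟩
  · -- membership: the cubic spline
    set ξw : ℝ → EuclideanSpace ℝ (Fin d) :=
      fun t => x₀ + t • x₁ + (t^2/2) • α + (t^3/6) • β with hξw
    set ξ1 : ℝ → EuclideanSpace ℝ (Fin d) :=
      fun t => x₁ + t • α + (t^2/2) • β with hξ1
    have hD1 : ∀ t : ℝ, HasDerivAt ξw (ξ1 t) t := by
      intro t
      have H := (((hasDerivAt_const t x₀).add ((hasDerivAt_id t).smul_const x₁)).add
        (((hasDerivAt_pow 2 t).div_const 2).smul_const α)).add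
        (((hasDerivAt_pow 3 t).div_const 6).smul_const β)
      refine H.congr_deriv ?_
      push_cast
      match_scalars <;> ring
    have hD2 : ∀ t : ℝ, HasDerivAt ξ1 (α + t • β) t := by
      intro t
      have H := (((hasDerivAt_const t x₁).add ((hasDerivAt_id t).smul_const α)).add
        (((hasDerivAt_pow 2 t).div_const 2).smul_const β))
      refine H.congr_deriv ?_
      push_cast
      match_scalars <;> ring
    have hderiv : deriv ξw = ξ1 := funext fun t => (hD1 t).deriv
    have hderiv2 : deriv ξ1 = fun t => α + t • β := funext fun t => (hD2 t).deriv
    have hit2 : iteratedDeriv 2 ξw = fun t => α + t • β := by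
      rw [iteratedDeriv_succ, iteratedDeriv_one, hderiv, hderiv2]
    refine ⟨ξw, ?_, ?_, ?_⟩
    · exact ((contDiff_const.add (contDiff_id.smul contDiff_const)).add
        (((contDiff_id.pow 2).div_const 2).smul contDiff_const)).add
        (((contDiff_id.pow 3).div_const 6).smul contDiff_const)
    · intro k
      fin_cases k
      · constructor
        · simp [hξw]
        · show ξw h = y₀
          rw [hξw]
          simp only
          rw [hα, hβ, hb, hw, ha]
          match_scalars <;> field_simp <;> ring
      · constructor
        · show iteratedDeriv 1 ξw 0 = x₁
          rw [iteratedDeriv_one, hderiv]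
          simp [hξ1]
        · show iteratedDeriv 1 ξw h = y₁
          rw [iteratedDeriv_one, hderiv]
          show ξ1 h = y₁
          rw [hξ1]
          simp only
          rw [hα, hβ, hb, hw, ha]
          match_scalars <;> field_simp <;> ring
    · rw [hit2, hPV]
  · -- lower bound
    rintro c ⟨ξ, hξ, hB, rfl⟩
    have h00 : ξ 0 = x₀ := by simpa using (hB 0).1
    have h0h : ξ h = y₀ := by simpa using (hB 0).2
    have h10 : deriv ξ 0 = x₁ := by
      have := (hB 1).1; rw [show ((1 : Fin 2) : ℕ) = 1 from rfl, iteratedDeriv_one] at this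
      simpa using this
    have h1h : deriv ξ h = y₁ := by
      have := (hB 1).2; rw [show ((1 : Fin 2) : ℕ) = 1 from rfl, iteratedDeriv_one] at this
      simpa using this
    have hξd : Differentiable ℝ ξ ∧ ContDiff ℝ 1 (deriv ξ) := by
      have h2 : ContDiff ℝ (1 + 1 : WithTop ℕ∞) ξ := by exact_mod_cast hξ
      obtain ⟨u1, -, u3⟩ := contDiff_succ_iff_deriv.mp h2
      exact ⟨u1, u3⟩
    have hd1 : Differentiable ℝ (deriv ξ) ∧ Continuous (deriv (deriv ξ)) := by
      rw [← contDiff_one_iff_deriv]; exact hξd.2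
    set f : ℝ → EuclideanSpace ℝ (Fin d) := deriv (deriv ξ) with hf
    have hitf : iteratedDeriv 2 ξ = f := by rw [iteratedDeriv_succ, iteratedDeriv_one]
    have hcf : Continuous f := hd1.2
    have hfi : IntervalIntegrable f volume 0 h := hcf.intervalIntegrable _ _
    have hI1 : ∫ t in (0:ℝ)..h, f t = a := by
      rw [intervalIntegral.integral_eq_sub_of_hasDerivAt
        (fun t _ => (hd1.1 t).hasDerivAt) hfi, h1h, h10]
    have hI2 : ∫ t in (0:ℝ)..h, (h - t) • f t = w := by
      have key : ∀ t ∈ Set.uIcc (0:ℝ) h,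
          HasDerivAt (fun s => (h - s) • deriv ξ s + ξ s) ((h - t) • f t) t := by
        intro t _
        have h1 : HasDerivAt (fun s : ℝ => h - s) (-1) t := (hasDerivAt_id t).const_sub h
        have h2 := (h1.smul ((hd1.1 t).hasDerivAt)).add ((hξd.1 t).hasDerivAt)
        refine h2.congr_deriv ?_
        module
      rw [intervalIntegral.integral_eq_sub_of_hasDerivAt key
        (((continuous_const.sub continuous_id).smul hcf).intervalIntegrable _ _),
        h1h, h10, h0h, h00]
      rw [hw]
      module
    have if1 : IntervalIntegrable (fun t : ℝ => h • f t) volume 0 h := by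
      apply Continuous.intervalIntegrable; exact hcf.const_smul h
    have if2 : IntervalIntegrable (fun t : ℝ => t • f t) volume 0 h := by
      apply Continuous.intervalIntegrable; exact continuous_id.smul hcf
    have hIt : ∫ t in (0:ℝ)..h, t • f t = h • a - w := by
      simp only [sub_smul] at hI2
      rw [intervalIntegral.integral_sub if1 if2,
        intervalIntegral.integral_smul, hI1] at hI2
      rw [← hI2]; abel
    set g : ℝ → EuclideanSpace ℝ (Fin d) := fun t => f t - (α + t • β) with hg
    have hcg : Continuous g := hcf.sub hcont
    have hgi : IntervalIntegrable g volume 0 h := hcg.intervalIntegrable _ _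
    have hg0 : ∫ t in (0:ℝ)..h, g t = 0 := by
      rw [hg]
      rw [intervalIntegral.integral_sub hfi (hcont.intervalIntegrable _ _), hI1, hintP,
        sub_self]
    have hg1 : ∫ t in (0:ℝ)..h, t • g t = 0 := by
      have if3 : IntervalIntegrable (fun t : ℝ => t • (α + t • β)) volume 0 h := by
        apply Continuous.intervalIntegrable; exact continuous_id.smul hcont
      simp only [hg, smul_sub]
      rw [intervalIntegral.integral_sub if2 if3, hIt, hinttP]
      rw [hα, hβ, hb]
      match_scalars <;> field_simp <;> ring
    have expand : ∀ t : ℝ, ‖f t‖^2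
        = ‖α + t • β‖^2 + (2 * ⟪α + t • β, g t⟫ + ‖g t‖^2) := by
      intro t
      have hft : f t = (α + t • β) + g t := by
        show f t = (α + t • β) + (f t - (α + t • β)); abel
      conv_lhs => rw [hft]
      rw [norm_add_sq_real]; ring
    have hcross : ∫ t in (0:ℝ)..h, (2 * ⟪α + t • β, g t⟫ + ‖g t‖^2)
        = ∫ t in (0:ℝ)..h, ‖g t‖^2 := by
      rw [intervalIntegral.integral_add
        (by apply Continuous.intervalIntegrable; exact
          (continuous_const.mul (hcont.inner hcg)))
        ((by apply Continuous.intervalIntegrable; exact (hcg.norm.pow 2)))]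
      have e : ∀ t : ℝ, 2 * ⟪α + t • β, g t⟫ = 2 * (⟪α, g t⟫ + ⟪β, t • g t⟫) := by
        intro t
        rw [inner_add_left, real_inner_smul_left β (g t) t, real_inner_smul_right β (g t) t]
      simp_rw [e]
      rw [intervalIntegral.integral_const_mul,
        intervalIntegral.integral_add
          (by apply Continuous.intervalIntegrable; exact continuous_const.inner hcg)
          (by apply Continuous.intervalIntegrable; exact
            continuous_const.inner (continuous_id.smul hcg)),
        inner_intervalIntegral α hgi,
        inner_intervalIntegral β (by
          apply Continuous.intervalIntegrable; exact continuous_id.smul hcg :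
          IntervalIntegrable (fun t : ℝ => t • g t) volume 0 h),
        hg0, hg1]
      simp
    rw [hitf]
    calc (1:ℝ)/h * (‖a‖^2 + 3*‖b‖^2) = ∫ t in (0:ℝ)..h, ‖α + t • β‖^2 := hPV.symm
      _ ≤ (∫ t in (0:ℝ)..h, ‖α + t • β‖^2) + ∫ t in (0:ℝ)..h, ‖g t‖^2 := by
          have : (0:ℝ) ≤ ∫ t in (0:ℝ)..h, ‖g t‖^2 :=
            intervalIntegral.integral_nonneg (le_of_lt hh) (fun t _ => sq_nonneg _)
          linarith
      _ = ∫ t in (0:ℝ)..h, ‖f t‖^2 := by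
          rw [← hcross, ← intervalIntegral.integral_add (f := fun t => ‖α + t • β‖^2)
            (g := fun t => 2 * ⟪α + t • β, g t⟫ + ‖g t‖^2)
            ((hcont.norm.pow 2).intervalIntegrable _ _ :
              IntervalIntegrable (fun t : ℝ => ‖α + t • β‖^2) volume 0 h)
            (by apply Continuous.intervalIntegrable;
                exact (continuous_const.mul (hcont.inner hcg)).add (hcg.norm.pow 2))]
          simp_rw [← expand]
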